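/- For all integers n ≥ 2 and q ≥ 2, f(n,q) ≥ q^{2^{n−1}} · (e^{(n−1)/(q−1)} · q^{n+1})^{−1/2}. In particular, f(n,q) ≥ q^{2^{n−1}(1+o(1))} as n,q → ∞. -/

import Mathlib

/-- `W` is an instance of the pattern `V`: the image of `V` under a semigroup
homomorphism sending each letter to a nonempty word. -/
def IsInst {α β : Type} (V : List α) (W : List β) : Prop :=
  ∃ φ : α → List β, (∀ a ∈ V, φ a ≠ []) ∧ W = (V.map φ).flatten

/-- `U` encounters `V`: some contiguous subword (infix) of `U` is an instance of `V`. -/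
def Encounters {α β : Type} (U : List β) (V : List α) : Prop :=
  ∃ W : List β, W <:+: U ∧ IsInst V W

/-- `U` avoids `V`: `U` does not encounter `V`. -/
def Avoids {α β : Type} (U : List β) (V : List α) : Prop :=
  ¬ Encounters U V

/-- The Zimin words over the alphabet ℕ: `Z₀ = ε`, `Z_{n+1} = Zₙ · n · Zₙ`. -/
def Zimin : ℕ → List ℕ
  | 0 => []
  | n + 1 => Zimin n ++ n :: Zimin n

/-- `zimf n q` is the smallest `M` such that every `q`-ary word of length `M`
encounters the Zimin word `Zₙ`. -/
noncomputable def zimf (n q : ℕ) : ℕ :=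
  sInf {M : ℕ | ∀ W : List (Fin q), W.length = M → Encounters W (Zimin n)}

/-- `ZC n q M` is the set of `q`-ary words of length `M` that are instances of `Zₙ`. -/
def ZC (n q M : ℕ) : Set (List (Fin q)) :=
  {W | W.length = M ∧ IsInst (Zimin n) W}

open Classical

lemma zimin_lt (n : ℕ) : ∀ a ∈ Zimin n, a < n := by
  induction n with
  | zero => simp [Zimin]
  | succ n ih =>
    intro a ha
    simp [Zimin] at ha
    rcases ha with h | rfl | h
    · exact (ih a h).trans (Nat.lt_succ_self n)
    · exact Nat.lt_succ_self _
    · exact (ih a h).trans (Nat.lt_succ_self n)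

lemma zimin_length (n : ℕ) : (Zimin n).length = 2 ^ n - 1 := by
  induction n with
  | zero => simp [Zimin]
  | succ n ih =>
    have h1 : 1 ≤ 2 ^ n := Nat.one_le_two_pow
    simp [Zimin, ih, pow_succ]
    omega

lemma isInst_length_ge {n q : ℕ} {W : List (Fin q)} (h : IsInst (Zimin n) W) :
    2 ^ n - 1 ≤ W.length := by
  obtain ⟨φ, hφ, rfl⟩ := h
  rw [← zimin_length]
  have : ∀ (l : List ℕ), (∀ a ∈ l, φ a ≠ []) → l.length ≤ ((l.map φ).flatten).length := by
    intro l
    induction l with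
    | nil => simp
    | cons a l ih =>
      intro h
      simp only [List.map_cons, List.flatten_cons, List.length_append, List.length_cons]
      have h1 : 1 ≤ (φ a).length := by
        have := h a (by simp)
        exact List.length_pos_iff.mpr this
      have h2 := ih (fun b hb => h b (by simp [hb]))
      omega
  exact this _ (fun a ha => hφ a ha)

lemma isInst_ne_nil {n q : ℕ} (hn : 1 ≤ n) {W : List (Fin q)} (h : IsInst (Zimin n) W) :
    W ≠ [] := by
  have := isInst_length_ge h
  have : 1 ≤ W.length := le_trans (by
    have : 2 ≤ 2 ^ n := by
      calc 2 = 2^1 := by norm_num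
      _ ≤ 2^n := Nat.pow_le_pow_right (by norm_num) hn
    omega) this
  exact List.ne_nil_of_length_pos (by omega)

/-- decomposition of Zimin instances -/
lemma isInst_zimin_succ_iff {n q : ℕ} {W : List (Fin q)} :
    IsInst (Zimin (n+1)) W ↔
      ∃ A C : List (Fin q), IsInst (Zimin n) A ∧ C ≠ [] ∧ W = A ++ C ++ A := by
  constructor
  · rintro ⟨φ, hφ, rfl⟩
    refine ⟨((Zimin n).map φ).flatten, φ n, ⟨φ, fun a ha => hφ a (by simp [Zimin, ha]), rfl⟩,
      hφ n (by simp [Zimin]), ?_⟩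
    simp [Zimin]
  · rintro ⟨A, C, ⟨ψ, hψ, rfl⟩, hC, rfl⟩
    refine ⟨fun a => if a = n then C else ψ a, ?_, ?_⟩
    · intro a ha
      simp only [Zimin, List.mem_append, List.mem_cons] at ha
      rcases ha with h | rfl | h
      · have := zimin_lt _ a h
        simpa [show a ≠ n by omega] using hψ a h
      · simp [hC]
      · have := zimin_lt _ a h
        simpa [show a ≠ n by omega] using hψ a h
    · have hmap : (Zimin n).map (fun a => if a = n then C else ψ a) = (Zimin n).map ψ := by
        apply List.map_congr_left
        intro a ha
        have := zimin_lt _ a ha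
        rw [if_neg (by omega)]
      simp [Zimin, hmap]

noncomputable def allW (q : ℕ) : ℕ → Finset (List (Fin q))
  | 0 => {[]}
  | m+1 => (Finset.univ ×ˢ allW q m).image fun p => p.1 :: p.2

lemma mem_allW {q m : ℕ} {W : List (Fin q)} : W ∈ allW q m ↔ W.length = m := by
  induction m generalizing W with
  | zero => simp [allW, List.length_eq_zero_iff]
  | succ m ih =>
    simp only [allW, Finset.mem_image, Finset.mem_product, Finset.mem_univ, true_and]
    constructor
    · rintro ⟨⟨a, l⟩, hl, rfl⟩
      simp [ih.mp hl]
    · intro h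
      match W with
      | [] => simp at h
      | a :: l =>
        exact ⟨(a, l), ih.mpr (by simpa using h), rfl⟩

lemma card_allW (q m : ℕ) : (allW q m).card = q ^ m := by
  induction m with
  | zero => simp [allW]
  | succ m ih =>
    rw [allW, Finset.card_image_of_injective _ (fun p p' h => by
      cases p; cases p'; simpa [Prod.ext_iff] using h)]
    simp [ih, pow_succ, mul_comm]

noncomputable def instF (n q m : ℕ) : Finset (List (Fin q)) :=
  (allW q m).filter (fun W => IsInst (Zimin n) W)

lemma mem_instF {n q m : ℕ} {W : List (Fin q)} :
    W ∈ instF n q m ↔ W.length = m ∧ IsInst (Zimin n) W := by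
  simp [instF, mem_allW]

lemma instF_empty_of_lt {n q a : ℕ} (h : a < 2 ^ n - 1) : instF n q a = ∅ := by
  ext W
  simp only [mem_instF, Finset.notMem_empty, iff_false, not_and]
  rintro rfl hW
  exact absurd (isInst_length_ge hW) (by omega)

lemma nat_geom {q : ℕ} (hq : 1 ≤ q) (N : ℕ) :
    (q - 1) * ∑ j ∈ Finset.range N, q ^ j = q ^ N - 1 := by
  induction N with
  | zero => simp
  | succ N ih =>
    rw [Finset.sum_range_succ, mul_add, ih]
    have h1 : 1 ≤ q ^ N := Nat.one_le_pow _ _ hq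
    have h2 : q ^ (N+1) = q * q ^ N := by ring
    have h3 : (q - 1) * q ^ N = q * q ^ N - q ^ N := by
      rw [Nat.sub_mul, one_mul]
    have h4 : q ^ N ≤ q * q ^ N := Nat.le_mul_of_pos_left _ (by omega)
    omega

lemma instF_succ_subset (n q m : ℕ) :
    instF (n+1) q m ⊆ ((Finset.range m).filter (fun a => 2*a < m)).biUnion
      (fun a => ((instF n q a) ×ˢ ((allW q (m - 2*a)).erase [])).image
        (fun AC => AC.1 ++ AC.2 ++ AC.1)) := by
  intro W hW
  obtain ⟨hlen, hinst⟩ := mem_instF.mp hW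
  obtain ⟨A, C, hA, hC, rfl⟩ := isInst_zimin_succ_iff.mp hinst
  have hlen' : 2 * A.length + C.length = m := by
    simp [List.length_append] at hlen; omega
  have hCpos : 1 ≤ C.length := List.length_pos_iff.mpr hC
  simp only [Finset.mem_biUnion, Finset.mem_filter, Finset.mem_range]
  refine ⟨A.length, ⟨by omega, by omega⟩, ?_⟩
  simp only [Finset.mem_image, Finset.mem_product, Finset.mem_erase]
  exact ⟨(A, C), ⟨mem_instF.mpr ⟨rfl, hA⟩, hC, mem_allW.mpr (show C.length = m - 2*A.length by omega)⟩, rfl⟩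

lemma instF_card_bound (q : ℕ) (hq : 2 ≤ q) : ∀ n, 1 ≤ n → ∀ m,
    (instF n q m).card * ((q-1)^(n-1) * q^(2^n - n - 1)) ≤ q^(m + n - 1) := by
  intro n
  induction n with
  | zero => omega
  | succ n ih =>
    intro _ m
    rcases Nat.eq_zero_or_pos n with rfl | hn
    · -- base case n = 1
      have h1 : (instF 1 q m).card ≤ q ^ m := by
        calc (instF 1 q m).card ≤ (allW q m).card := Finset.card_le_card (Finset.filter_subset _ _)
        _ = q ^ m := card_allW q m
      have e : (q-1)^(1-1) * q^(2^1 - 1 - 1) = 1 := by norm_num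
      have e2 : m + 1 - 1 = m := by omega
      rw [e, e2, mul_one]
      exact h1
    -- step
    have hν1 : 1 ≤ 2^n - 1 := by
      have : 2 ≤ 2^n := by calc 2 = 2^1 := by norm_num
                               _ ≤ 2^n := Nat.pow_le_pow_right (by norm_num) hn
      omega
    have h2n : n + 1 ≤ 2^n := Nat.lt_two_pow_self
    have h2n1 : 2^(n+1) = 2 * 2^n := by ring
    set ν := 2^n - 1 with hν
    -- card bound via covering
    have hcov := Finset.card_le_card (instF_succ_subset n q m)
    have hsum : (instF (n+1) q m).card ≤
        ∑ a ∈ (Finset.range m).filter (fun a => 2*a < m),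
          (instF n q a).card * q^(m - 2*a) := by
      refine hcov.trans ((Finset.card_biUnion_le).trans (Finset.sum_le_sum ?_))
      intro a _
      calc (((instF n q a) ×ˢ ((allW q (m - 2*a)).erase [])).image
              (fun AC => AC.1 ++ AC.2 ++ AC.1)).card
          ≤ ((instF n q a) ×ˢ ((allW q (m - 2*a)).erase [])).card := Finset.card_image_le
        _ = (instF n q a).card * ((allW q (m - 2*a)).erase []).card := Finset.card_product _ _
        _ ≤ (instF n q a).card * (allW q (m - 2*a)).card :=
            Nat.mul_le_mul_left _ (Finset.card_le_card (Finset.erase_subset _ _))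
        _ = (instF n q a).card * q^(m - 2*a) := by rw [card_allW]
    -- multiply through
    have key : ∀ a ∈ (Finset.range m).filter (fun a => 2*a < m),
        (instF n q a).card * q^(m - 2*a) * ((q-1)^(n+1-1) * q^(2^(n+1) - (n+1) - 1)) ≤
          (if ν ≤ a then (q-1) * q^((m + n - 1) - (a - ν)) else 0) := by
      intro a ha
      simp only [Finset.mem_filter, Finset.mem_range] at ha
      by_cases hνa : ν ≤ a
      · rw [if_pos hνa]
        have hIH := ih hn a
        have hfac : (q-1)^(n+1-1) * q^(2^(n+1) - (n+1) - 1)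
            = ((q-1)^(n-1) * q^(2^n - n - 1)) * ((q-1) * q^ν) := by
          have e1 : n+1-1 = (n-1) + 1 := by omega
          have e2 : 2^(n+1) - (n+1) - 1 = (2^n - n - 1) + ν := by omega
          rw [e1, e2, pow_succ, pow_add]
          ring
        calc (instF n q a).card * q^(m - 2*a) * ((q-1)^(n+1-1) * q^(2^(n+1) - (n+1) - 1))
            = ((instF n q a).card * ((q-1)^(n-1) * q^(2^n - n - 1))) *
                (q^(m - 2*a) * ((q-1) * q^ν)) := by rw [hfac]; ring
          _ ≤ q^(a + n - 1) * (q^(m - 2*a) * ((q-1) * q^ν)) := Nat.mul_le_mul_right _ hIH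
          _ = (q-1) * (q^(a + n - 1) * q^(m - 2*a) * q^ν) := by ring
          _ = (q-1) * q^((m + n - 1) - (a - ν)) := by
              have hexp : (a + n - 1) + (m - 2*a) + ν = (m + n - 1) - (a - ν) := by omega
              rw [← pow_add, ← pow_add, hexp]
      · rw [if_neg hνa]
        have : instF n q a = ∅ := instF_empty_of_lt (by omega)
        simp [this]
    have hmain : (instF (n+1) q m).card * ((q-1)^(n+1-1) * q^(2^(n+1) - (n+1) - 1)) ≤
        ∑ a ∈ (Finset.range m).filter (fun a => 2*a < m),
          (if ν ≤ a then (q-1) * q^((m + n - 1) - (a - ν)) else 0) := by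
      calc (instF (n+1) q m).card * ((q-1)^(n+1-1) * q^(2^(n+1) - (n+1) - 1))
          ≤ (∑ a ∈ (Finset.range m).filter (fun a => 2*a < m),
              (instF n q a).card * q^(m - 2*a)) * ((q-1)^(n+1-1) * q^(2^(n+1) - (n+1) - 1)) :=
            Nat.mul_le_mul_right _ hsum
        _ = ∑ a ∈ (Finset.range m).filter (fun a => 2*a < m),
              (instF n q a).card * q^(m - 2*a) * ((q-1)^(n+1-1) * q^(2^(n+1) - (n+1) - 1)) :=
            Finset.sum_mul ..
        _ ≤ _ := Finset.sum_le_sum key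
    -- bound the sum by geometric series
    have hgeo : ∑ a ∈ (Finset.range m).filter (fun a => 2*a < m),
        (if ν ≤ a then (q-1) * q^((m + n - 1) - (a - ν)) else 0) ≤ q^(m + n) := by
      rw [← Finset.sum_filter]
      set t := ((Finset.range m).filter (fun a => 2*a < m)).filter (fun a => ν ≤ a) with ht
      have hinj : ∀ x ∈ t, ∀ y ∈ t, x - ν = y - ν → x = y := by
        intro x hx y hy hxy
        have h1 : ν ≤ x := (Finset.mem_filter.mp hx).2
        have h2 : ν ≤ y := (Finset.mem_filter.mp hy).2
        omega
      have himg : ∑ a ∈ t, (q-1) * q^((m + n - 1) - (a - ν))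
          = ∑ k ∈ t.image (fun a => a - ν), (q-1) * q^((m + n - 1) - k) := by
        rw [Finset.sum_image hinj]
      have hsub : t.image (fun a => a - ν) ⊆ Finset.range (m + n) := by
        intro k hk
        simp only [Finset.mem_image, ht, Finset.mem_filter, Finset.mem_range] at hk
        obtain ⟨a, ⟨⟨ha, _⟩, _⟩, rfl⟩ := hk
        simp only [Finset.mem_range]
        omega
      calc ∑ a ∈ t, (q-1) * q^((m + n - 1) - (a - ν))
          = ∑ k ∈ t.image (fun a => a - ν), (q-1) * q^((m + n - 1) - k) := himg
        _ ≤ ∑ k ∈ Finset.range (m + n), (q-1) * q^((m + n - 1) - k) :=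
            Finset.sum_le_sum_of_subset hsub
        _ = ∑ k ∈ Finset.range (m + n), (q-1) * q^k := by
            rw [← Finset.sum_range_reflect]
            apply Finset.sum_congr rfl
            intro k hk
            simp only [Finset.mem_range] at hk
            have : m + n - 1 - (m + n - 1 - k) = k := by omega
            rw [this]
        _ = (q-1) * ∑ k ∈ Finset.range (m + n), q^k := by rw [Finset.mul_sum]
        _ = q^(m+n) - 1 := nat_geom (by omega) _
        _ ≤ q^(m+n) := Nat.sub_le _ _
    have : m + (n + 1) - 1 = m + n := by omega
    rw [this]
    exact hmain.trans hgeo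

lemma count_main {n q M : ℕ} (hq : 2 ≤ q) (hn : 1 ≤ n)
    (hM : ∀ W : List (Fin q), W.length = M → Encounters W (Zimin n)) :
    (q-1)^(n-1) * q^(2^n - n - 1) ≤ M^2 * q^(n-1) := by
  set pairs := ((Finset.range M) ×ˢ (Finset.Icc 1 M)).filter (fun pm => pm.1 + pm.2 ≤ M)
    with hpairs
  have hcov : allW q M ⊆ pairs.biUnion (fun pm =>
      ((allW q pm.1) ×ˢ (instF n q pm.2) ×ˢ (allW q (M - pm.1 - pm.2))).image
        (fun PIQ => PIQ.1 ++ PIQ.2.1 ++ PIQ.2.2)) := by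
    intro W hW
    have hlen : W.length = M := mem_allW.mp hW
    obtain ⟨I, hinf, hinst⟩ := hM W hlen
    obtain ⟨P, Q, hPQ⟩ := hinf
    have hIne : I ≠ [] := isInst_ne_nil hn hinst
    have hIpos : 1 ≤ I.length := List.length_pos_iff.mpr hIne
    have hlen' : P.length + I.length + Q.length = M := by
      rw [← hlen, ← hPQ]; simp only [List.length_append]
    simp only [Finset.mem_biUnion, hpairs, Finset.mem_filter, Finset.mem_product,
      Finset.mem_range, Finset.mem_Icc]
    refine ⟨(P.length, I.length), ⟨⟨by omega, by omega, by omega⟩, by omega⟩, ?_⟩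
    simp only [Finset.mem_image, Finset.mem_product]
    refine ⟨(P, I, Q), ⟨mem_allW.mpr rfl, mem_instF.mpr ⟨rfl, hinst⟩,
      mem_allW.mpr (show Q.length = M - P.length - I.length by omega)⟩, ?_⟩
    show P ++ I ++ Q = W
    exact hPQ
  have hX : ∀ pm ∈ pairs,
      (((allW q pm.1) ×ˢ (instF n q pm.2) ×ˢ (allW q (M - pm.1 - pm.2))).image
        (fun PIQ : List (Fin q) × List (Fin q) × List (Fin q) =>
          PIQ.1 ++ PIQ.2.1 ++ PIQ.2.2)).card * ((q-1)^(n-1) * q^(2^n - n - 1))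
        ≤ q^(M + n - 1) := by
    rintro ⟨p, m⟩ hpm
    simp only [hpairs, Finset.mem_filter, Finset.mem_product, Finset.mem_range,
      Finset.mem_Icc] at hpm
    obtain ⟨⟨hp, hm1, hm2⟩, hpm'⟩ := hpm
    calc (((allW q p) ×ˢ (instF n q m) ×ˢ (allW q (M - p - m))).image
          (fun PIQ : List (Fin q) × List (Fin q) × List (Fin q) =>
            PIQ.1 ++ PIQ.2.1 ++ PIQ.2.2)).card * ((q-1)^(n-1) * q^(2^n - n - 1))
        ≤ ((allW q p) ×ˢ (instF n q m) ×ˢ (allW q (M - p - m))).card *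
            ((q-1)^(n-1) * q^(2^n - n - 1)) :=
          Nat.mul_le_mul_right _ Finset.card_image_le
      _ = q^p * ((instF n q m).card * ((q-1)^(n-1) * q^(2^n - n - 1))) * q^(M - p - m) := by
          simp only [Finset.card_product, card_allW]
          ring
      _ ≤ q^p * q^(m + n - 1) * q^(M - p - m) :=
          Nat.mul_le_mul_right _ (Nat.mul_le_mul_left _ (instF_card_bound q hq n hn m))
      _ = q^(M + n - 1) := by
          rw [← pow_add, ← pow_add]
          congr 1
          omega
  have hpairs_card : pairs.card ≤ M * M := by
    calc pairs.card ≤ ((Finset.range M) ×ˢ (Finset.Icc 1 M)).card :=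
          Finset.card_le_card (Finset.filter_subset _ _)
      _ = M * M := by simp [Finset.card_product]
  have hchain : q^M * ((q-1)^(n-1) * q^(2^n - n - 1)) ≤ (M * M) * q^(M + n - 1) := by
    calc q^M * ((q-1)^(n-1) * q^(2^n - n - 1))
        = (allW q M).card * ((q-1)^(n-1) * q^(2^n - n - 1)) := by rw [card_allW]
      _ ≤ (pairs.biUnion (fun pm =>
            ((allW q pm.1) ×ˢ (instF n q pm.2) ×ˢ (allW q (M - pm.1 - pm.2))).image
              (fun PIQ => PIQ.1 ++ PIQ.2.1 ++ PIQ.2.2))).card *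
            ((q-1)^(n-1) * q^(2^n - n - 1)) :=
          Nat.mul_le_mul_right _ (Finset.card_le_card hcov)
      _ ≤ (∑ pm ∈ pairs, (((allW q pm.1) ×ˢ (instF n q pm.2) ×ˢ
            (allW q (M - pm.1 - pm.2))).image
              (fun PIQ => PIQ.1 ++ PIQ.2.1 ++ PIQ.2.2)).card) *
            ((q-1)^(n-1) * q^(2^n - n - 1)) :=
          Nat.mul_le_mul_right _ Finset.card_biUnion_le
      _ = ∑ pm ∈ pairs, (((allW q pm.1) ×ˢ (instF n q pm.2) ×ˢ
            (allW q (M - pm.1 - pm.2))).image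
              (fun PIQ => PIQ.1 ++ PIQ.2.1 ++ PIQ.2.2)).card *
            ((q-1)^(n-1) * q^(2^n - n - 1)) := Finset.sum_mul ..
      _ ≤ ∑ _pm ∈ pairs, q^(M + n - 1) := Finset.sum_le_sum hX
      _ = pairs.card * q^(M + n - 1) := by rw [Finset.sum_const, smul_eq_mul]
      _ ≤ (M * M) * q^(M + n - 1) := Nat.mul_le_mul_right _ hpairs_card
  have hsplit : q^(M + n - 1) = q^(n-1) * q^M := by
    rw [← pow_add]
    congr 1
    omega
  rw [hsplit] at hchain
  have hq0 : 0 < q^M := Nat.pow_pos (by omega)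
  have : ((q-1)^(n-1) * q^(2^n - n - 1)) * q^M ≤ (M^2 * q^(n-1)) * q^M := by
    calc ((q-1)^(n-1) * q^(2^n - n - 1)) * q^M
        = q^M * ((q-1)^(n-1) * q^(2^n - n - 1)) := by ring
      _ ≤ (M * M) * (q^(n-1) * q^M) := hchain
      _ = (M^2 * q^(n-1)) * q^M := by ring
  exact Nat.le_of_mul_le_mul_right this hq0

lemma enc_eq {q : ℕ} (I : List (Fin q)) (j : ℕ) :
    (I.map some).getD j none = I[j]? := by
  rw [List.getD_eq_getElem?_getD, List.getElem?_map]
  cases hj : I[j]? <;> simp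

lemma enc_inj {q L : ℕ} {I₁ I₂ : List (Fin q)} (h₁ : I₁.length ≤ L) (h₂ : I₂.length ≤ L)
    (h : ∀ i : Fin (L+1), (I₁.map some).getD i none = (I₂.map some).getD i none) :
    I₁ = I₂ := by
  apply List.ext_getElem?
  intro i
  by_cases hi : i < L + 1
  · have h' := h ⟨i, hi⟩
    rwa [enc_eq, enc_eq] at h'
  · rw [List.getElem?_eq_none (by omega : I₁.length ≤ i),
      List.getElem?_eq_none (by omega : I₂.length ≤ i)]

lemma take_add_drop {β : Type} (W : List β) (i x y : ℕ) :
    (W.drop i).take (x+y) = (W.drop i).take x ++ (W.drop (i+x)).take y := by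
  rw [List.take_add]
  congr 1
  rw [List.drop_drop]

lemma take_infix {β : Type} (W : List β) (i k : ℕ) : (W.drop i).take k <:+: W :=
  ((W.drop i).take_prefix k).isInfix.trans (W.drop_suffix i).isInfix

lemma zimin_exists (q n : ℕ) :
    ∃ M, ∀ W : List (Fin q), M ≤ W.length → Encounters W (Zimin n) := by
  induction n with
  | zero =>
    refine ⟨0, fun W _ => ⟨[], List.nil_infix, fun _ => [], by simp [Zimin], by simp [Zimin]⟩⟩
  | succ n ih =>
    obtain ⟨M, hM⟩ := ih
    set L := M + 1 with hL
    set V := Fintype.card (Fin (L+1) → Option (Fin q)) with hV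
    refine ⟨2*L*V + L, fun W hW => ?_⟩
    -- blocks
    have hblock : ∀ t : Fin (V+1), ((W.drop (2*L*t)).take L).length = L := by
      intro t
      have ht : (t : ℕ) ≤ V := Fin.is_le t
      have h1 : 2*L*(t:ℕ) ≤ 2*L*V := Nat.mul_le_mul_left _ ht
      simp only [List.length_take, List.length_drop]
      omega
    have hEnc : ∀ t : Fin (V+1), ∃ I P Q : List (Fin q),
        IsInst (Zimin n) I ∧ P ++ I ++ Q = (W.drop (2*L*t)).take L := by
      intro t
      obtain ⟨I, hinf, hinst⟩ := hM _ (by rw [hblock t]; omega)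
      obtain ⟨P, Q, hPQ⟩ := hinf
      exact ⟨I, P, Q, hinst, hPQ⟩
    choose I P Q hinst heq using hEnc
    have hlenst : ∀ t, (P t).length + (I t).length + (Q t).length = L := by
      intro t
      have := congrArg List.length (heq t)
      simp only [List.length_append, hblock t] at this
      omega
    -- occurrences
    have occ : ∀ t : Fin (V+1),
        (W.drop (2*L*t + (P t).length)).take (I t).length = I t := by
      intro t
      have h1 : (P t ++ I t ++ Q t).drop (P t).length = I t ++ Q t := by
        rw [List.append_assoc, List.drop_left]
      have h2 : ((W.drop (2*L*t)).take L).drop (P t).length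
          = (W.drop (2*L*t + (P t).length)).take (L - (P t).length) := by
        rw [List.drop_take, List.drop_drop]
      have h3 : I t ++ Q t = (W.drop (2*L*t + (P t).length)).take (L - (P t).length) := by
        rw [← h2, ← heq t, h1]
      have h4 : (I t ++ Q t).take (I t).length = I t := List.take_left ..
      rw [h3] at h4
      rw [List.take_take] at h4
      have h5 : min (I t).length (L - (P t).length) = (I t).length := by
        have := hlenst t
        omega
      rwa [h5] at h4
    -- pigeonhole
    obtain ⟨u', v', huv', hfeq⟩ :=
      Fintype.exists_ne_map_eq_of_card_lt
        (fun t : Fin (V+1) => (fun i : Fin (L+1) => ((I t).map some).getD i none))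
        (by simp [hV])
    have hIlen : ∀ t, (I t).length ≤ L := fun t => by have := hlenst t; omega
    have hIeq' : I u' = I v' :=
      enc_inj (hIlen u') (hIlen v') (fun i => congrFun hfeq i)
    -- wlog u < v
    obtain ⟨u, v, huv, hIeq⟩ : ∃ u v : Fin (V+1), (u:ℕ) < (v:ℕ) ∧ I u = I v := by
      rcases lt_or_gt_of_ne huv' with h | h
      · exact ⟨u', v', h, hIeq'⟩
      · exact ⟨v', u', h, hIeq'.symm⟩
    -- build the Zimin (n+1) instance
    set A := I u with hA
    set a := A.length with ha
    set s₁ := 2*L*(u:ℕ) + (P u).length with hs₁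
    set s₂ := 2*L*(v:ℕ) + (P v).length with hs₂
    have hsep : s₁ + a + 1 ≤ s₂ := by
      have h1 : (u:ℕ) + 1 ≤ (v:ℕ) := huv
      have h2 : 2*L*((u:ℕ)+1) ≤ 2*L*(v:ℕ) := Nat.mul_le_mul_left _ h1
      have h2' : 2*L*((u:ℕ)+1) = 2*L*(u:ℕ) + 2*L := by ring
      have hL1 : 1 ≤ L := by omega
      have h3 := hlenst u
      have ha' : a = (I u).length := rfl
      omega
    set c := s₂ - (s₁ + a) with hc
    set C := (W.drop (s₁ + a)).take c with hC
    have hClen : C ≠ [] := by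
      have hv : (v:ℕ) ≤ V := Fin.is_le v
      have h1 : 2*L*(v:ℕ) ≤ 2*L*V := Nat.mul_le_mul_left _ hv
      have h2 := hlenst v
      have hlenC : C.length = min c (W.length - (s₁ + a)) := by
        simp [hC, List.length_take, List.length_drop]
      intro hnil
      rw [hnil] at hlenC
      simp only [List.length_nil] at hlenC
      omega
    have hX : (W.drop s₁).take (a + c + a) = A ++ C ++ A := by
      rw [take_add_drop W s₁ (a+c) a, take_add_drop W s₁ a c]
      have e1 : (W.drop s₁).take a = A := by
        have := occ u
        rwa [← hs₁, ← ha] at this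
      have e2 : s₁ + (a + c) = s₂ := by omega
      have e3 : (W.drop (s₁ + (a+c))).take a = A := by
        rw [e2]
        have := occ v
        rw [← hs₂] at this
        rw [hIeq] at ha
        rw [← ha] at this
        rw [this]
        exact hIeq.symm
      rw [e1, e3, ← hC]
    exact ⟨A ++ C ++ A, hX ▸ take_infix W s₁ (a+c+a),
      isInst_zimin_succ_iff.mpr ⟨A, C, hA ▸ hinst u, hClen, rfl⟩⟩

/-- Lower bound: for all `n ≥ 2` and `q ≥ 2`,
`f(n,q) ≥ q^{2^{n−1}} · (e^{(n−1)/(q−1)} · q^{n+1})^{−1/2}`. -/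
theorem zimf_lower_bound (n q : ℕ) (hn : 2 ≤ n) (hq : 2 ≤ q) :
    (q : ℝ) ^ (2 ^ (n - 1)) *
        (Real.exp (((n : ℝ) - 1) / ((q : ℝ) - 1)) * (q : ℝ) ^ (n + 1)) ^ (-(1 : ℝ) / 2) ≤
      (zimf n q : ℝ) := by
  -- the minimum is attained
  obtain ⟨M', hM'⟩ := zimin_exists q n
  have hmem : zimf n q ∈ {M : ℕ | ∀ W : List (Fin q), W.length = M → Encounters W (Zimin n)} :=
    Nat.sInf_mem ⟨M', fun W hW => hM' W hW.ge⟩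
  set M := zimf n q with hMdef
  have hcount : (q-1)^(n-1) * q^(2^n - n - 1) ≤ M^2 * q^(n-1) :=
    count_main hq (by omega) hmem
  -- cast to ℝ
  have hq1R : (1:ℝ) < (q:ℝ) := by exact_mod_cast hq.trans_lt' one_lt_two
  have hqm1 : (0:ℝ) < (q:ℝ) - 1 := by linarith
  have hqR : (0:ℝ) < (q:ℝ) := by linarith
  have hR : ((q:ℝ)-1)^(n-1) * (q:ℝ)^(2^n - n - 1) ≤ (M:ℝ)^2 * (q:ℝ)^(n-1) := by
    have h := (Nat.cast_le (α := ℝ)).mpr hcount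
    push_cast at h
    rwa [Nat.cast_sub (by omega : 1 ≤ q), Nat.cast_one] at h
  set x : ℝ := ((n:ℝ)-1)/((q:ℝ)-1) with hx
  have hkey : ((q:ℝ)/((q:ℝ)-1))^(n-1) ≤ Real.exp x := by
    have h1 : (q:ℝ)/((q:ℝ)-1) = 1/((q:ℝ)-1) + 1 := by field_simp; ring
    have h2 : 1/((q:ℝ)-1) + 1 ≤ Real.exp (1/((q:ℝ)-1)) := Real.add_one_le_exp _
    have h3 : ((q:ℝ)/((q:ℝ)-1))^(n-1) ≤ (Real.exp (1/((q:ℝ)-1)))^(n-1) := by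
      apply pow_le_pow_left₀ (by positivity) (h1 ▸ h2)
    refine h3.trans (le_of_eq ?_)
    rw [← Real.exp_nat_mul]
    congr 1
    rw [hx]
    have : ((n - 1 : ℕ) : ℝ) = (n:ℝ) - 1 := by
      rw [Nat.cast_sub (by omega : 1 ≤ n), Nat.cast_one]
    rw [this]
    field_simp
  set E : ℝ := Real.exp x * (q:ℝ)^(n+1) with hE
  have hEpos : (0:ℝ) < E := by positivity
  have hMnn : (0:ℝ) ≤ (M:ℝ) := Nat.cast_nonneg M
  -- the squared inequality
  have h2n : n + 1 ≤ 2^n := Nat.lt_two_pow_self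
  have hsq : (q:ℝ)^(2^n) * E⁻¹ ≤ (M:ℝ)^2 := by
    rw [mul_inv_le_iff₀' hEpos]
    have hsplit : (q:ℝ)^(2^n) = (q:ℝ)^(2^n - n - 1) * (q:ℝ)^(n+1) := by
      rw [← pow_add]
      congr 1
      omega
    rw [hsplit, hE]
    have hb_le : (q:ℝ)^(n-1) ≤ Real.exp x * ((q:ℝ)-1)^(n-1) := by
      have hdiv : ((q:ℝ)/((q:ℝ)-1))^(n-1) = (q:ℝ)^(n-1) / ((q:ℝ)-1)^(n-1) := div_pow ..
      rw [hdiv] at hkey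
      rw [div_le_iff₀ (by positivity)] at hkey
      linarith [hkey]
    have hcpos : (0:ℝ) < ((q:ℝ)-1)^(n-1) := by positivity
    have ha_le : (q:ℝ)^(2^n - n - 1) ≤ (M:ℝ)^2 * Real.exp x := by
      have h1 : ((q:ℝ)-1)^(n-1) * (q:ℝ)^(2^n - n - 1) ≤
          (M:ℝ)^2 * (Real.exp x * ((q:ℝ)-1)^(n-1)) := by
        calc ((q:ℝ)-1)^(n-1) * (q:ℝ)^(2^n - n - 1) ≤ (M:ℝ)^2 * (q:ℝ)^(n-1) := hR
          _ ≤ (M:ℝ)^2 * (Real.exp x * ((q:ℝ)-1)^(n-1)) := by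
              apply mul_le_mul_of_nonneg_left hb_le (by positivity)
      have h2 : (q:ℝ)^(2^n - n - 1) * ((q:ℝ)-1)^(n-1) ≤
          ((M:ℝ)^2 * Real.exp x) * ((q:ℝ)-1)^(n-1) := by ring_nf; ring_nf at h1; linarith
      exact le_of_mul_le_mul_right h2 hcpos
    calc (q:ℝ)^(2^n - n - 1) * (q:ℝ)^(n+1)
        ≤ ((M:ℝ)^2 * Real.exp x) * (q:ℝ)^(n+1) :=
          mul_le_mul_of_nonneg_right ha_le (by positivity)
      _ = (M:ℝ)^2 * (Real.exp x * (q:ℝ)^(n+1)) := by ring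
      _ = Real.exp x * (q:ℝ)^(n+1) * (M:ℝ)^2 := by ring
  -- conclude by taking square roots
  have hLHSnn : (0:ℝ) ≤ (q : ℝ) ^ (2 ^ (n - 1)) * E ^ (-(1:ℝ)/2) := by positivity
  refine le_of_pow_le_pow_left₀ (two_ne_zero) hMnn ?_
  calc ((q : ℝ) ^ (2 ^ (n - 1)) * E ^ (-(1:ℝ)/2))^2
      = ((q:ℝ) ^ (2^(n-1)))^2 * (E ^ (-(1:ℝ)/2))^2 := mul_pow ..
    _ = (q:ℝ)^(2^n) * E⁻¹ := by
        congr 1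
        · rw [← pow_mul]
          congr 1
          rw [← pow_succ]
          congr 1
          omega
        · rw [← Real.rpow_natCast (E ^ (-(1:ℝ)/2)) 2, ← Real.rpow_mul hEpos.le]
          norm_num
          exact Real.rpow_neg_one E
    _ ≤ (M:ℝ)^2 := hsq
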